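/- For a vertex v of K, h_f(v) = 0 if and only if v is a critical vertex of f (i.e., v is not matched in the gradient field: every edge e ≻ v satisfies f(e) > f(v)). -/

import Mathlib

open Finset

variable {V : Type*}

/-- A finite abstract simplicial complex: a finite family of nonempty finite vertex sets
closed under passing to nonempty subsets. -/
def IsComplex [DecidableEq V] (K : Finset (Finset V)) : Prop :=
  (∀ σ ∈ K, σ.Nonempty) ∧ ∀ σ ∈ K, ∀ τ : Finset V, τ ⊆ σ → τ.Nonempty → τ ∈ K

/-- Dimension of a simplex. -/
def dimS (σ : Finset V) : ℕ := σ.card - 1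

/-- `σ` is an immediate face (facet) of `τ`. -/
def Facet [DecidableEq V] (σ τ : Finset V) : Prop := σ ⊆ τ ∧ σ.card + 1 = τ.card

instance [DecidableEq V] (σ τ : Finset V) : Decidable (Facet σ τ) := by
  unfold Facet; infer_instance

/-- A discrete (combinatorial) Morse function in the sense of Forman. -/
def IsMorse [DecidableEq V] {α : Type*} [LinearOrder α]
    (K : Finset (Finset V)) (f : Finset V → α) : Prop :=
  ∀ σ ∈ K,
    (K.filter (fun τ => Facet σ τ ∧ f τ ≤ f σ)).card ≤ 1 ∧
    (K.filter (fun ν => Facet ν σ ∧ f σ ≤ f ν)).card ≤ 1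

/-- Two discrete Morse functions are equivalent (induce the same gradient field). -/
def MorseEquiv [DecidableEq V] {α β : Type*} [LinearOrder α] [LinearOrder β]
    (K : Finset (Finset V)) (f : Finset V → α) (g : Finset V → β) : Prop :=
  ∀ σ ∈ K, ∀ τ ∈ K, Facet σ τ → (f σ < f τ ↔ g σ < g τ)

/-- A gradient pair of `f`. -/
def GradPair [DecidableEq V] (K : Finset (Finset V)) (f : Finset V → ℝ)
    (σ τ : Finset V) : Prop :=
  σ ∈ K ∧ τ ∈ K ∧ Facet σ τ ∧ f τ ≤ f σ

/-- The normalization `h_f` of a discrete Morse function `f`. -/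
noncomputable def normalization [DecidableEq V] (K : Finset (Finset V))
    (f : Finset V → ℝ) (σ : Finset V) : ℕ :=
  sInf {n : ℕ | ∃ g : Finset V → ℕ, IsMorse K g ∧ MorseEquiv K f g ∧ g σ = n}

/-- A critical simplex of `f`. -/
def IsCritical [DecidableEq V] {α : Type*} [LinearOrder α]
    (K : Finset (Finset V)) (f : Finset V → α) (σ : Finset V) : Prop :=
  σ ∈ K ∧ (∀ τ ∈ K, Facet σ τ → f σ < f τ) ∧ (∀ ν ∈ K, Facet ν σ → f ν < f σ)

instance [DecidableEq V] {α : Type*} [LinearOrder α]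
    (K : Finset (Finset V)) (f : Finset V → α) (σ : Finset V) :
    Decidable (IsCritical K f σ) := by
  unfold IsCritical; infer_instance

/-- The alternating sum of `h_f` over all simplices of `K`. -/
noncomputable def morseSum [DecidableEq V] (K : Finset (Finset V)) (f : Finset V → ℝ) : ℤ :=
  ∑ σ ∈ K, (-1 : ℤ) ^ (dimS σ) * (normalization K f σ : ℤ)

/-- The alternating sum of `h_f` over the critical simplices of `f`. -/
noncomputable def critSum [DecidableEq V] (K : Finset (Finset V)) (f : Finset V → ℝ) : ℤ :=
  ∑ σ ∈ K.filter (fun σ => IsCritical K f σ),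
    (-1 : ℤ) ^ (dimS σ) * (normalization K f σ : ℤ)

/-- Number of critical simplices of `f`. -/
noncomputable def numCritical [DecidableEq V] (K : Finset (Finset V)) (f : Finset V → ℝ) : ℕ :=
  (K.filter (fun σ => IsCritical K f σ)).card

/-- An optimal discrete Morse function minimizes the number of critical simplices. -/
def IsOptimal [DecidableEq V] (K : Finset (Finset V)) (f : Finset V → ℝ) : Prop :=
  IsMorse K f ∧ ∀ g : Finset V → ℝ, IsMorse K g → numCritical K f ≤ numCritical K g

/-- The invariant `𝔑(K)`: minimum of `|𝔑(K,f)|` over optimal Morse functions. -/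
noncomputable def NK [DecidableEq V] (K : Finset (Finset V)) : ℕ :=
  sInf {n : ℕ | ∃ f : Finset V → ℝ, IsOptimal K f ∧ n = (critSum K f).natAbs}

/-- An elementary collapse removing the free pair `(σ, τ)`. -/
def CollapseStep [DecidableEq V] (K K' : Finset (Finset V)) : Prop :=
  ∃ σ τ, σ ∈ K ∧ τ ∈ K ∧ Facet σ τ ∧ (∀ ρ ∈ K, σ ⊂ ρ → ρ = τ) ∧
    K' = (K.erase σ).erase τ

/-- Collapsibility: `K` collapses to a point by elementary collapses. -/
def Collapsible [DecidableEq V] (K : Finset (Finset V)) : Prop :=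
  ∃ v : V, Relation.ReflTransGen CollapseStep K {{v}}

/-- Connectivity of a complex. -/
def ComplexConnected [DecidableEq V] (K : Finset (Finset V)) : Prop :=
  K.Nonempty ∧ ∀ u v : V, {u} ∈ K → {v} ∈ K →
    Relation.ReflTransGen (fun a b => ({a, b} : Finset V) ∈ K) u v

/-- Signed incidence number `⟨∂τ, ν⟩` of an immediate face. -/
noncomputable def bsign [DecidableEq V] [LinearOrder V] (ν τ : Finset V) : ℝ :=
  if Facet ν τ then ∑ v ∈ τ \ ν, (-1 : ℝ) ^ ((τ.filter (fun u => u < v)).card) else 0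

/-- The simplicial boundary of a real chain `c` supported on `K`. -/
noncomputable def bnd [DecidableEq V] [LinearOrder V] (K : Finset (Finset V))
    (c : Finset V → ℝ) (ν : Finset V) : ℝ :=
  ∑ τ ∈ K, bsign ν τ * c τ

/-- A `k`-chain of `K`. -/
def IsChainOf (K : Finset (Finset V)) (k : ℕ) (c : Finset V → ℝ) : Prop :=
  ∀ τ, c τ ≠ 0 → τ ∈ K ∧ τ.card = k + 1

/-- `H₂(K; ℝ) = 0` for a complex of dimension `≤ 2`: every 2-cycle is zero. -/
def H2Zero [DecidableEq V] [LinearOrder V] (K : Finset (Finset V)) : Prop :=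
  ∀ c : Finset V → ℝ, IsChainOf K 2 c → (∀ ν, bnd K c ν = 0) → ∀ τ, c τ = 0

/-- `H₁(K; ℝ) = 0`: every 1-cycle is a boundary. -/
def H1Zero [DecidableEq V] [LinearOrder V] (K : Finset (Finset V)) : Prop :=
  ∀ c : Finset V → ℝ, IsChainOf K 1 c → (∀ ν, bnd K c ν = 0) →
    ∃ d : Finset V → ℝ, IsChainOf K 2 d ∧ ∀ ν, bnd K d ν = c ν

/-- Acyclicity (all reduced real homology vanishes) for a complex of dimension `≤ 2`. -/
def Acyclic [DecidableEq V] [LinearOrder V] (K : Finset (Finset V)) : Prop :=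
  ComplexConnected K ∧ H1Zero K ∧ H2Zero K

/-- Euler characteristic. -/
def eulerChar (K : Finset (Finset V)) : ℤ :=
  ∑ σ ∈ K, (-1 : ℤ) ^ (dimS σ)

/-- Gradient paths: `GPath K f σ₀ σᵣ p` says `p = [σ₀, τ₀, σ₁, τ₁, …, σᵣ]` is a gradient
path of `f` from `σ₀` to `σᵣ`. -/
inductive GPath [DecidableEq V] (K : Finset (Finset V)) (f : Finset V → ℝ) :
    Finset V → Finset V → List (Finset V) → Prop
  | nil : ∀ σ, σ ∈ K → GPath K f σ σ [σ]
  | cons : ∀ σ τ σ' e l, σ ∈ K → τ ∈ K → Facet σ τ → f τ ≤ f σ → Facet σ' τ → σ' ≠ σ →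
      GPath K f σ' e l → GPath K f σ e (σ :: τ :: l)

/-- Multiplicity (weight) of a gradient path, following Forman. -/
noncomputable def pweight [DecidableEq V] [LinearOrder V] : List (Finset V) → ℝ
  | σ :: τ :: rest => (-(bsign σ τ) * bsign rest.headI τ) * pweight rest
  | _ => 1

/-- The coefficient `λ^τ_σ` of `σ` in the Morse-complex boundary of `τ`. -/
noncomputable def morseCoeff [DecidableEq V] [LinearOrder V] (K : Finset (Finset V))
    (f : Finset V → ℝ) (τ σ : Finset V) : ℝ :=
  ∑ᶠ p ∈ {p : List (Finset V) | Facet p.headI τ ∧ GPath K f p.headI σ p},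
    bsign p.headI τ * pweight p

/-- One stellar subdivision step (at `σ`, with new vertex `v`). -/
def StellarStep (K K' : Finset (Finset ℕ)) : Prop :=
  ∃ σ v, σ ∈ K ∧ 2 ≤ σ.card ∧ (∀ τ ∈ K, v ∉ τ) ∧
    K' = K.filter (fun τ => ¬ σ ⊆ τ) ∪
      (K.filter (fun τ => σ ⊆ τ)).biUnion
        (fun τ => (σ.powerset.filter (fun μ => μ ≠ σ)).image
          (fun μ => insert v ((τ \ σ) ∪ μ)))

/-- Subdivisions (iterated stellar subdivisions). -/
def Subdivision (K L : Finset (Finset ℕ)) : Prop :=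
  Relation.ReflTransGen StellarStep K L

/-- `Ñ(K)`: the minimum of `𝔑(L)` over subdivisions `L` of `K`. -/
noncomputable def NtildeK (K : Finset (Finset ℕ)) : ℕ :=
  sInf {n : ℕ | ∃ L, Subdivision K L ∧ n = NK L}
/-- Lexicographic key order on `(f σ, -dim σ)`. -/
def Klt (f : Finset V → ℝ) (a b : Finset V) : Prop :=
  f a < f b ∨ (f a = f b ∧ b.card < a.card)

noncomputable instance (f : Finset V → ℝ) (a b : Finset V) : Decidable (Klt f a b) := by
  unfold Klt; infer_instance

lemma Klt_trans {f : Finset V → ℝ} {a b c : Finset V} (h1 : Klt f a b) (h2 : Klt f b c) :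
    Klt f a c := by
  rcases h1 with h1 | ⟨h1e, h1c⟩ <;> rcases h2 with h2 | ⟨h2e, h2c⟩
  · exact Or.inl (h1.trans h2)
  · exact Or.inl (h2e ▸ h1)
  · exact Or.inl (h1e ▸ h2)
  · exact Or.inr ⟨h1e.trans h2e, h2c.trans h1c⟩

lemma Klt_irrefl {f : Finset V → ℝ} (a : Finset V) : ¬ Klt f a a := by
  rintro (h | ⟨-, h⟩) <;> exact lt_irrefl _ h

/-- The rank function associated to a key order. -/
noncomputable def gnorm [DecidableEq V] (K : Finset (Finset V)) (f : Finset V → ℝ) (σ : Finset V) : ℕ :=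
  (K.filter (fun ρ => Klt f ρ σ)).card

lemma gnorm_lt [DecidableEq V] {K : Finset (Finset V)} {f : Finset V → ℝ} {a b : Finset V}
    (ha : a ∈ K) (h : Klt f a b) : gnorm K f a < gnorm K f b := by
  apply Finset.card_lt_card
  constructor
  · intro ρ hρ
    simp only [Finset.mem_filter] at hρ ⊢
    exact ⟨hρ.1, Klt_trans hρ.2 h⟩
  · intro hsub
    have := hsub (Finset.mem_filter.mpr ⟨ha, h⟩)
    exact Klt_irrefl a (Finset.mem_filter.mp this).2

lemma morseEquiv_gnorm [DecidableEq V] (K : Finset (Finset V)) (f : Finset V → ℝ) :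
    MorseEquiv K f (fun σ => (gnorm K f σ : ℕ)) := by
  intro σ hσ τ hτ hft
  constructor
  · intro hlt
    exact_mod_cast gnorm_lt hσ (Or.inl hlt)
  · intro hg
    by_contra hlt
    push_neg at hlt
    have hklt : Klt f τ σ := by
      rcases lt_or_eq_of_le hlt with h | h
      · exact Or.inl h
      · exact Or.inr ⟨h, by have := hft.2; omega⟩
    have := gnorm_lt hτ hklt
    exact absurd hg (by exact_mod_cast Nat.lt_asymm this)

lemma isMorse_of_equiv [DecidableEq V] {α β : Type*} [LinearOrder α] [LinearOrder β]
    {K : Finset (Finset V)} {f : Finset V → α} {g : Finset V → β}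
    (h : MorseEquiv K f g) (hf : IsMorse K f) : IsMorse K g := by
  intro σ hσ
  obtain ⟨h1, h2⟩ := hf σ hσ
  constructor
  · have : K.filter (fun τ => Facet σ τ ∧ g τ ≤ g σ)
        = K.filter (fun τ => Facet σ τ ∧ f τ ≤ f σ) := by
      apply Finset.filter_congr
      intro τ hτ
      constructor
      · rintro ⟨hft, hle⟩
        exact ⟨hft, not_lt.mp (fun hc => absurd ((h σ hσ τ hτ hft).mp hc) (not_lt.mpr hle))⟩
      · rintro ⟨hft, hle⟩
        exact ⟨hft, not_lt.mp (fun hc => absurd ((h σ hσ τ hτ hft).mpr hc) (not_lt.mpr hle))⟩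
    rw [this]; exact h1
  · have : K.filter (fun ν => Facet ν σ ∧ g σ ≤ g ν)
        = K.filter (fun ν => Facet ν σ ∧ f σ ≤ f ν) := by
      apply Finset.filter_congr
      intro ν hν
      constructor
      · rintro ⟨hft, hle⟩
        exact ⟨hft, not_lt.mp (fun hc => absurd ((h ν hν σ hσ hft).mp hc) (not_lt.mpr hle))⟩
      · rintro ⟨hft, hle⟩
        exact ⟨hft, not_lt.mp (fun hc => absurd ((h ν hν σ hσ hft).mpr hc) (not_lt.mpr hle))⟩
    rw [this]; exact h2

/-- For a vertex `v`, `h_f(v) = 0` iff `v` is a critical vertex of `f`. -/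
theorem normalization_eq_zero_iff_criticalVertex {V : Type*} [DecidableEq V]
    (K : Finset (Finset V)) (hK : IsComplex K) (hconn : ComplexConnected K)
    (f : Finset V → ℝ) (hf : IsMorse K f)
    (v : Finset V) (hv : v ∈ K) (hcard : v.card = 1) :
    normalization K f v = 0 ↔ IsCritical K f v := by
  constructor
  · intro h0
    -- the defining set is nonempty, so 0 belongs to it
    have hne : {n : ℕ | ∃ g : Finset V → ℕ, IsMorse K g ∧ MorseEquiv K f g ∧ g v = n}.Nonempty :=
      ⟨gnorm K f v, fun σ => gnorm K f σ,
        isMorse_of_equiv (morseEquiv_gnorm K f) hf, morseEquiv_gnorm K f, rfl⟩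
    have hmem : 0 ∈ {n : ℕ | ∃ g : Finset V → ℕ, IsMorse K g ∧ MorseEquiv K f g ∧ g v = n} := by
      have := Nat.sInf_mem hne
      rwa [show sInf {n : ℕ | ∃ g : Finset V → ℕ, IsMorse K g ∧ MorseEquiv K f g ∧ g v = n} = 0
        from h0] at this
    obtain ⟨g, hgM, hgE, hg0⟩ := hmem
    refine ⟨hv, ?_, ?_⟩
    · intro τ hτ hft
      by_contra hlt
      push_neg at hlt
      have hgτ : g τ = 0 := by
        have : ¬ g v < g τ := fun hc =>
          absurd ((hgE v hv τ hτ hft).mpr hc) (not_lt.mpr hlt)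
        omega
      -- τ is an edge; both of its vertices violate the Morse condition at τ
      obtain ⟨w, hwτ, hwv⟩ : ∃ w ∈ τ, w ∉ v := by
        by_contra hc
        push_neg at hc
        have : τ ⊆ v := hc
        have := Finset.card_le_card this
        have := hft.2
        omega
      have hwK : ({w} : Finset V) ∈ K :=
        hK.2 τ hτ {w} (Finset.singleton_subset_iff.mpr hwτ) (Finset.singleton_nonempty w)
      have hwF : Facet ({w} : Finset V) τ :=
        ⟨Finset.singleton_subset_iff.mpr hwτ, by have := hft.2; simp; omega⟩
      have hle := (hgM τ hτ).2
      have hvmem : v ∈ K.filter (fun ν => Facet ν τ ∧ g τ ≤ g ν) :=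
        Finset.mem_filter.mpr ⟨hv, hft, by omega⟩
      have hwmem : ({w} : Finset V) ∈ K.filter (fun ν => Facet ν τ ∧ g τ ≤ g ν) :=
        Finset.mem_filter.mpr ⟨hwK, hwF, by omega⟩
      have := Finset.card_le_one.mp hle v hvmem {w} hwmem
      exact hwv (this ▸ Finset.mem_singleton_self w)
    · intro ν hν hft
      have h1 := hft.2
      have h2 := hK.1 ν hν
      rw [hcard] at h1
      have : ν.card = 0 := by omega
      rw [Finset.card_eq_zero] at this
      exact absurd (this ▸ h2) (by simp)
  · intro hcrit
    -- build a nonnegative equivalent Morse function vanishing at v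
    set m : ℝ := K.inf' ⟨v, hv⟩ f with hm
    set f' : Finset V → ℝ := fun σ => if σ = v then m - 1 else f σ with hf'
    have hτnev : ∀ σ τ : Finset V, σ ∈ K → Facet σ τ → τ ≠ v := by
      intro σ τ hσ hft hc
      have h1 := hft.2
      have h2 := hK.1 σ hσ
      rw [hc, hcard] at h1
      have : σ.card = 0 := by omega
      rw [Finset.card_eq_zero] at this
      exact absurd (this ▸ h2) (by simp)
    have hE1 : MorseEquiv K f f' := by
      intro σ hσ τ hτ hft
      have hτv : τ ≠ v := hτnev σ τ hσ hft
      by_cases hσv : σ = v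
      · subst hσv
        have hfvτ : f σ < f τ := hcrit.2.1 τ hτ hft
        have : f' σ < f' τ := by
          simp only [hf', if_pos rfl, if_neg hτv]
          have : m ≤ f τ := Finset.inf'_le f hτ
          linarith
        exact iff_of_true hfvτ this
      · simp only [hf', if_neg hσv, if_neg hτv]
    have hE2 : MorseEquiv K f' (fun σ => (gnorm K f' σ : ℕ)) := morseEquiv_gnorm K f'
    have hgE : MorseEquiv K f (fun σ => gnorm K f' σ) := by
      intro σ hσ τ hτ hft
      exact (hE1 σ hσ τ hτ hft).trans (hE2 σ hσ τ hτ hft)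
    have hgM : IsMorse K (fun σ => gnorm K f' σ) := isMorse_of_equiv hgE hf
    have hgv : gnorm K f' v = 0 := by
      unfold gnorm
      rw [Finset.card_eq_zero, Finset.filter_eq_empty_iff]
      intro ρ hρ
      by_cases hρv : ρ = v
      · exact hρv ▸ Klt_irrefl ρ
      · rintro (hc | ⟨hc, -⟩) <;>
        · have h1 : f' ρ = f ρ := by simp [hf', hρv]
          have h2 : f' v = m - 1 := by simp [hf']
          have h3 : m ≤ f ρ := Finset.inf'_le f hρ
          rw [h1, h2] at hc
          linarith
    have : 0 ∈ {n : ℕ | ∃ g : Finset V → ℕ, IsMorse K g ∧ MorseEquiv K f g ∧ g v = n} :=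
      ⟨fun σ => gnorm K f' σ, hgM, hgE, hgv⟩
    exact Nat.sInf_eq_zero.mpr (Or.inl this)
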